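/- Let f_1, …, f_n ∈ k[x] satisfy k[f_1,…,f_n] = k[x], and let w ∈ Γ^n. Then f_1^w, …, f_n^w are algebraically independent over k if and only if k[f_1^w,…,f_n^w] = k[x]. -/

import Mathlib

open MvPolynomial Polynomial

set_option synthInstance.maxHeartbeats 1000000
set_option maxHeartbeats 1000000

variable {k : Type*} [Field k] [CharZero k] {n : ℕ}
variable {Γ : Type*} [AddCommGroup Γ] [LinearOrder Γ] [IsOrderedAddMonoid Γ]

/-- The `w`-degree of a multivariate polynomial, with `wdeg w 0 = ⊥ = -∞`. -/
noncomputable def wdeg (w : Fin n → Γ) (f : MvPolynomial (Fin n) k) : WithBot Γ :=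
  f.support.sup fun d => ((∑ i, d i • w i : Γ) : WithBot Γ)

/-- The leading `w`-homogeneous form `f^w` of `f`. -/
noncomputable def lform (w : Fin n → Γ) (f : MvPolynomial (Fin n) k) :
    MvPolynomial (Fin n) k :=
  letI : DecidableEq (WithBot Γ) := Classical.decEq _
  ∑ d ∈ f.support.filter
      (fun d => ((∑ i, d i • w i : Γ) : WithBot Γ) = wdeg w f),
    MvPolynomial.monomial d (f.coeff d)

/-- `deg_w^g Φ = max_i deg_w (φ_i g^i)` for `Φ = Σ_i φ_i y^i`. -/
noncomputable def wdegG (w : Fin n → Γ) (g : MvPolynomial (Fin n) k)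
    (Φ : Polynomial (MvPolynomial (Fin n) k)) : WithBot Γ :=
  Φ.support.sup fun i => wdeg w (Φ.coeff i * g ^ i)

/-- The leading form `Φ^{w,g}` of `Φ` for the grading in which `x_j` has weight `w_j`
and `y` has weight `deg_w g`: the sum of `φ_i^w y^i` over those `i` with
`deg_w (φ_i g^i) = deg_w^g Φ`. -/
noncomputable def pLform (w : Fin n → Γ) (g : MvPolynomial (Fin n) k)
    (Φ : Polynomial (MvPolynomial (Fin n) k)) : Polynomial (MvPolynomial (Fin n) k) :=
  letI : DecidableEq (WithBot Γ) := Classical.decEq _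
  ∑ i ∈ Φ.support.filter (fun i => wdeg w (Φ.coeff i * g ^ i) = wdegG w g Φ),
    Polynomial.C (lform w (Φ.coeff i)) * Polynomial.X ^ i

/-- `m_w^g(Φ) = min { i : deg_w^g (∂_y^i Φ) = deg_w ((∂_y^i Φ)(g)) }`. -/
noncomputable def mwg (w : Fin n → Γ) (g : MvPolynomial (Fin n) k)
    (Φ : Polynomial (MvPolynomial (Fin n) k)) : ℕ :=
  sInf {i : ℕ |
    wdegG w g (Polynomial.derivative^[i] Φ) = wdeg w ((Polynomial.derivative^[i] Φ).eval g)}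

/-- The `w`-degree of the differential form `dh_1 ∧ ⋯ ∧ dh_s`: the maximum over all
`s`-tuples of indices of the `w`-degree of the corresponding `s × s` Jacobian minor
plus the sum of the corresponding weights (noninjective tuples contribute `⊥`). -/
noncomputable def wedgeDeg (w : Fin n → Γ) {s : ℕ} (h : Fin s → MvPolynomial (Fin n) k) :
    WithBot Γ :=
  Finset.univ.sup fun e : Fin s → Fin n =>
    wdeg w (Matrix.det (Matrix.of fun a b : Fin s => MvPolynomial.pderiv (e b) (h a)))
      + ((∑ b, w (e b) : Γ) : WithBot Γ)

/-- The initial algebra `A^w`: the `k`-subalgebra generated by `f^w` for `f ∈ A \ {0}`. -/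
noncomputable def initAlg (w : Fin n → Γ) (A : Subalgebra k (MvPolynomial (Fin n) k)) :
    Subalgebra k (MvPolynomial (Fin n) k) :=
  Algebra.adjoin k (lform w '' ((A : Set (MvPolynomial (Fin n) k)) \ {0}))

/-- The field of fractions `K^w` of `A^w`, realized as a subfield of the fraction field
of `k[x]`. -/
noncomputable def KW (w : Fin n → Γ) (A : Subalgebra k (MvPolynomial (Fin n) k)) :
    Subfield (FractionRing (MvPolynomial (Fin n) k)) :=
  Subfield.closure
    (algebraMap (MvPolynomial (Fin n) k) (FractionRing (MvPolynomial (Fin n) k)) ''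
      (initAlg w A : Set (MvPolynomial (Fin n) k)))

/-- The field of fractions of a subalgebra `A` of `k[x]`, realized as a subfield of the
fraction field of `k[x]`. -/
noncomputable def fracSub (A : Subalgebra k (MvPolynomial (Fin n) k)) :
    Subfield (FractionRing (MvPolynomial (Fin n) k)) :=
  Subfield.closure
    (algebraMap (MvPolynomial (Fin n) k) (FractionRing (MvPolynomial (Fin n) k)) ''
      (A : Set (MvPolynomial (Fin n) k)))

/-- A polynomial is `w`-homogeneous if all its monomials have the same `w`-degree. -/
def IsWHom (w : Fin n → Γ) (f : MvPolynomial (Fin n) k) : Prop :=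
  ∃ γ : Γ, ∀ d ∈ f.support, (∑ i, d i • w i : Γ) = γ

set_option linter.unusedSectionVars false

section Aux

variable (w : Fin n → Γ)

def dw (d : Fin n →₀ ℕ) : Γ := ∑ i, d i • w i

variable {w}

lemma dw_add (a b : Fin n →₀ ℕ) : dw w (a + b) = dw w a + dw w b := by
  simp [dw, add_smul, Finset.sum_add_distrib]

lemma dw_zero : dw w (0 : Fin n →₀ ℕ) = 0 := by simp [dw]

lemma wdeg_def (p : MvPolynomial (Fin n) k) :
    wdeg w p = p.support.sup fun d => ((dw w d : Γ) : WithBot Γ) := rfl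

lemma coeff_lform (p : MvPolynomial (Fin n) k) (d : Fin n →₀ ℕ) :
    (lform w p).coeff d =
      if ((dw w d : Γ) : WithBot Γ) = wdeg w p then p.coeff d else 0 := by
  classical
  unfold lform
  rw [Finset.filter_congr_decidable, MvPolynomial.coeff_sum]
  simp_rw [MvPolynomial.coeff_monomial]
  rw [Finset.sum_ite_eq']
  simp only [Finset.mem_filter, MvPolynomial.mem_support_iff]
  split_ifs with h1 h2 h3 <;> try rfl
  · exact absurd h1.2 h2
  · by_contra hc
    exact h1 ⟨fun h => hc (h ▸ rfl) |>.elim, h3⟩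

lemma le_wdeg {p : MvPolynomial (Fin n) k} {d : Fin n →₀ ℕ} (hd : d ∈ p.support) :
    ((dw w d : Γ) : WithBot Γ) ≤ wdeg w p := by
  rw [wdeg_def]
  exact Finset.le_sup (f := fun d => ((dw w d : Γ) : WithBot Γ)) hd

lemma wdeg_zero : wdeg w (0 : MvPolynomial (Fin n) k) = ⊥ := by
  simp [wdeg_def]

lemma lform_zero : lform w (0 : MvPolynomial (Fin n) k) = 0 := by
  ext d; simp [coeff_lform]

lemma exists_wdeg {p : MvPolynomial (Fin n) k} (hp : p ≠ 0) :
    ∃ γ : Γ, wdeg w p = (γ : WithBot Γ) := by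
  obtain ⟨d, _, hd⟩ := Finset.exists_mem_eq_sup p.support
    (MvPolynomial.support_nonempty.mpr hp) (fun d => ((dw w d : Γ) : WithBot Γ))
  exact ⟨dw w d, hd⟩

/-- `p` is `w`-homogeneous of degree `γ` and nonzero. -/
def WHom (w : Fin n → Γ) (γ : Γ) (p : MvPolynomial (Fin n) k) : Prop :=
  p ≠ 0 ∧ ∀ d ∈ p.support, dw w d = γ

lemma WHom.wdeg_eq {γ : Γ} {p : MvPolynomial (Fin n) k} (h : WHom w γ p) :
    wdeg w p = (γ : WithBot Γ) := by
  apply le_antisymm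
  · rw [wdeg_def]
    exact Finset.sup_le fun d hd => by rw [h.2 d hd]
  · obtain ⟨d, hd⟩ := MvPolynomial.support_nonempty.mpr h.1
    rw [← h.2 d hd]
    exact le_wdeg hd

lemma WHom.lform_eq {γ : Γ} {p : MvPolynomial (Fin n) k} (h : WHom w γ p) :
    lform w p = p := by
  ext d
  rw [coeff_lform]
  split_ifs with hd
  · rfl
  · by_contra hc
    have hd' : d ∈ p.support := MvPolynomial.mem_support_iff.mpr fun h0 => hc h0.symm
    exact hd (by rw [h.2 d hd', h.wdeg_eq])

lemma lform_whom {p : MvPolynomial (Fin n) k} (hp : p ≠ 0) {γ : Γ}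
    (hγ : wdeg w p = (γ : WithBot Γ)) : WHom w γ (lform w p) := by
  constructor
  · obtain ⟨d, hd, hsup⟩ := Finset.exists_mem_eq_sup p.support
      (MvPolynomial.support_nonempty.mpr hp) (fun d => ((dw w d : Γ) : WithBot Γ))
    rw [← wdeg_def] at hsup
    intro h0
    have : (lform w p).coeff d = 0 := by rw [h0]; rfl
    rw [coeff_lform, if_pos hsup.symm] at this
    exact MvPolynomial.mem_support_iff.mp hd this
  · intro d hd
    have := MvPolynomial.mem_support_iff.mp hd
    rw [coeff_lform] at this
    by_cases hcond : ((dw w d : Γ) : WithBot Γ) = wdeg w p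
    · rw [hγ] at hcond
      exact_mod_cast hcond
    · exact absurd (if_neg hcond) this

lemma wdeg_sub_lform_lt {p : MvPolynomial (Fin n) k} (hp : p ≠ 0) {γ : Γ}
    (hγ : wdeg w p = (γ : WithBot Γ)) :
    wdeg w (p - lform w p) < (γ : WithBot Γ) := by
  rw [wdeg_def]
  refine (Finset.sup_lt_iff (by exact WithBot.bot_lt_coe γ)).mpr fun d hd => ?_
  have hc := MvPolynomial.mem_support_iff.mp hd
  rw [MvPolynomial.coeff_sub, coeff_lform] at hc
  by_cases hcond : ((dw w d : Γ) : WithBot Γ) = wdeg w p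
  · rw [if_pos hcond, sub_self] at hc; exact absurd rfl hc
  · rw [if_neg hcond, sub_zero] at hc
    have hle : ((dw w d : Γ) : WithBot Γ) ≤ wdeg w p :=
      le_wdeg (MvPolynomial.mem_support_iff.mpr hc)
    rw [hγ] at hle hcond
    exact lt_of_le_of_ne hle hcond

/-- recognition lemma -/
lemma wdeg_lform_of {γ : Γ} {p h : MvPolynomial (Fin n) k} (hh : WHom w γ h)
    (hlt : wdeg w (p - h) < (γ : WithBot Γ)) :
    wdeg w p = (γ : WithBot Γ) ∧ lform w p = h := by
  classical
  have key : ∀ d : Fin n →₀ ℕ, dw w d = γ → p.coeff d = h.coeff d := by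
    intro d hd
    have : d ∉ (p - h).support := by
      intro hmem
      have := le_wdeg (w := w) hmem
      rw [hd] at this
      exact absurd (this.trans_lt hlt) (lt_irrefl _)
    have := MvPolynomial.notMem_support_iff.mp this
    rw [MvPolynomial.coeff_sub, sub_eq_zero] at this
    exact this
  have hwdeg : wdeg w p = (γ : WithBot Γ) := by
    apply le_antisymm
    · rw [wdeg_def]
      apply Finset.sup_le
      intro d hd
      have : p = h + (p - h) := by ring
      have hd' : d ∈ h.support ∪ (p - h).support := by
        apply MvPolynomial.support_add
        rw [← this]; exact hd
      rcases Finset.mem_union.mp hd' with h1 | h1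
      · rw [hh.2 d h1]
      · exact (le_wdeg h1).trans hlt.le
    · obtain ⟨d, hd⟩ := MvPolynomial.support_nonempty.mpr hh.1
      have hdγ := hh.2 d hd
      have : p.coeff d ≠ 0 := by
        rw [key d hdγ]; exact MvPolynomial.mem_support_iff.mp hd
      rw [← hdγ]
      exact le_wdeg (MvPolynomial.mem_support_iff.mpr this)
  refine ⟨hwdeg, ?_⟩
  ext d
  rw [coeff_lform, hwdeg]
  split_ifs with hcond
  · exact key d (by exact_mod_cast hcond)
  · by_contra hc
    have hd : d ∈ h.support := MvPolynomial.mem_support_iff.mpr fun h0 => hc h0.symm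
    exact hcond (by exact_mod_cast (hh.2 d hd))


lemma wb_lt_le {a b : WithBot Γ} {γ δ : Γ} (h1 : a < (γ : WithBot Γ))
    (h2 : b ≤ (δ : WithBot Γ)) : a + b < ((γ + δ : Γ) : WithBot Γ) := by
  cases a with
  | bot => rw [WithBot.bot_add]; exact WithBot.bot_lt_coe _
  | coe a =>
    cases b with
    | bot => rw [WithBot.add_bot]; exact WithBot.bot_lt_coe _
    | coe b =>
      rw [← WithBot.coe_add, WithBot.coe_lt_coe] at *
      rw [WithBot.coe_le_coe] at h2
      exact add_lt_add_of_lt_of_le h1 h2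

lemma wb_le_lt {a b : WithBot Γ} {γ δ : Γ} (h1 : a ≤ (γ : WithBot Γ))
    (h2 : b < (δ : WithBot Γ)) : a + b < ((γ + δ : Γ) : WithBot Γ) := by
  rw [add_comm a b, add_comm γ δ]
  exact wb_lt_le h2 h1

lemma wdeg_mul_le (p q : MvPolynomial (Fin n) k) :
    wdeg w (p * q) ≤ wdeg w p + wdeg w q := by
  classical
  rw [wdeg_def]
  apply Finset.sup_le
  intro d hd
  obtain ⟨a, ha, b, hb, rfl⟩ := Finset.mem_add.mp (MvPolynomial.support_mul p q hd)
  rw [dw_add, WithBot.coe_add]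
  exact add_le_add (le_wdeg ha) (le_wdeg hb)

lemma wdeg_add_le (p q : MvPolynomial (Fin n) k) :
    wdeg w (p + q) ≤ wdeg w p ⊔ wdeg w q := by
  classical
  rw [wdeg_def]
  apply Finset.sup_le
  intro d hd
  rcases Finset.mem_union.mp (MvPolynomial.support_add hd) with h | h
  · exact (le_wdeg h).trans le_sup_left
  · exact (le_wdeg h).trans le_sup_right

lemma wdeg_sum_lt {ι : Type*} (s : Finset ι) (F : ι → MvPolynomial (Fin n) k) {γ : Γ}
    (h : ∀ i ∈ s, wdeg w (F i) < (γ : WithBot Γ)) :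
    wdeg w (∑ i ∈ s, F i) < (γ : WithBot Γ) := by
  classical
  induction s using Finset.cons_induction with
  | empty => rw [Finset.sum_empty, wdeg_zero]; exact WithBot.bot_lt_coe _
  | cons i s hi ih =>
    rw [Finset.sum_cons]
    refine (wdeg_add_le _ _).trans_lt (sup_lt_iff.mpr ⟨h i (Finset.mem_cons_self i s), ?_⟩)
    exact ih fun j hj => h j (Finset.mem_cons_of_mem hj)

lemma WHom.mul {γ δ : Γ} {p q : MvPolynomial (Fin n) k} (hp : WHom w γ p)
    (hq : WHom w δ q) : WHom w (γ + δ) (p * q) := by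
  classical
  refine ⟨mul_ne_zero hp.1 hq.1, fun d hd => ?_⟩
  obtain ⟨a, ha, b, hb, rfl⟩ := Finset.mem_add.mp (MvPolynomial.support_mul p q hd)
  rw [dw_add, hp.2 a ha, hq.2 b hb]

lemma WHom.one : WHom w 0 (1 : MvPolynomial (Fin n) k) := by
  refine ⟨one_ne_zero, fun d hd => ?_⟩
  have := MvPolynomial.mem_support_iff.mp hd
  rw [MvPolynomial.coeff_one] at this
  have hd0 : d = 0 := by
    by_contra h
    exact this (if_neg (fun h' => h h'.symm))
  rw [hd0, dw_zero]

lemma WHom.C {c : k} (hc : c ≠ 0) : WHom w 0 (MvPolynomial.C c : MvPolynomial (Fin n) k) := by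
  refine ⟨fun h => hc (by simpa using (MvPolynomial.C_eq_zero.mp h)), fun d hd => ?_⟩
  have := MvPolynomial.mem_support_iff.mp hd
  rw [MvPolynomial.coeff_C] at this
  have hd0 : d = 0 := by
    by_contra h
    exact this (if_neg (fun h' => h h'.symm))
  rw [hd0, dw_zero]

/-- `h` is the `w`-leading form of `p`, of degree `γ`. -/
def WDec (w : Fin n → Γ) (γ : Γ) (p h : MvPolynomial (Fin n) k) : Prop :=
  WHom w γ h ∧ wdeg w (p - h) < (γ : WithBot Γ)

lemma WDec.lform_eq {γ : Γ} {p h : MvPolynomial (Fin n) k} (hd : WDec w γ p h) :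
    lform w p = h := (wdeg_lform_of hd.1 hd.2).2

lemma WDec.wdeg_eq {γ : Γ} {p h : MvPolynomial (Fin n) k} (hd : WDec w γ p h) :
    wdeg w p = (γ : WithBot Γ) := (wdeg_lform_of hd.1 hd.2).1

lemma WDec.wdeg_le {γ : Γ} {p h : MvPolynomial (Fin n) k} (hd : WDec w γ p h) :
    wdeg w p ≤ (γ : WithBot Γ) := hd.wdeg_eq.le

lemma WDec.self {p : MvPolynomial (Fin n) k} (hp : p ≠ 0) {γ : Γ}
    (hγ : wdeg w p = (γ : WithBot Γ)) : WDec w γ p (lform w p) :=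
  ⟨lform_whom hp hγ, wdeg_sub_lform_lt hp hγ⟩

lemma WDec.mul {γ δ : Γ} {p h q j : MvPolynomial (Fin n) k} (h1 : WDec w γ p h)
    (h2 : WDec w δ q j) : WDec w (γ + δ) (p * q) (h * j) := by
  refine ⟨h1.1.mul h2.1, ?_⟩
  have key : p * q - h * j = (p - h) * q + h * (q - j) := by ring
  rw [key]
  have e1 : wdeg w ((p - h) * q) < ((γ + δ : Γ) : WithBot Γ) :=
    (wdeg_mul_le _ _).trans_lt (wb_lt_le h1.2 h2.wdeg_le)
  have e2 : wdeg w (h * (q - j)) < ((γ + δ : Γ) : WithBot Γ) :=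
    (wdeg_mul_le _ _).trans_lt (wb_le_lt h1.1.wdeg_eq.le h2.2)
  exact (wdeg_add_le _ _).trans_lt (sup_lt_iff.mpr ⟨e1, e2⟩)

lemma WDec.one : WDec w 0 (1 : MvPolynomial (Fin n) k) 1 := by
  refine ⟨WHom.one, ?_⟩
  rw [sub_self, wdeg_zero]
  exact WithBot.bot_lt_coe _

lemma WDec.pow {γ : Γ} {p h : MvPolynomial (Fin n) k} (h1 : WDec w γ p h) (m : ℕ) :
    WDec w (m • γ) (p ^ m) (h ^ m) := by
  induction m with
  | zero => rw [pow_zero, pow_zero, zero_smul]; exact WDec.one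
  | succ m ih =>
    rw [pow_succ, pow_succ, succ_nsmul]
    exact ih.mul h1

lemma WDec.prod {ι : Type*} (s : Finset ι) {γ : ι → Γ} {p h : ι → MvPolynomial (Fin n) k}
    (hd : ∀ i ∈ s, WDec w (γ i) (p i) (h i)) :
    WDec w (∑ i ∈ s, γ i) (∏ i ∈ s, p i) (∏ i ∈ s, h i) := by
  classical
  induction s using Finset.cons_induction with
  | empty => simpa using WDec.one
  | cons i s hi ih =>
    rw [Finset.sum_cons, Finset.prod_cons, Finset.prod_cons]
    exact (hd i (Finset.mem_cons_self i s)).mul (ih fun j hj => hd j (Finset.mem_cons_of_mem hj))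

lemma support_sum_subset {ι : Type*} (s : Finset ι) (F : ι → MvPolynomial (Fin n) k) :
    (∑ i ∈ s, F i).support ⊆ s.biUnion fun i => (F i).support := by
  classical
  induction s using Finset.cons_induction with
  | empty => simp
  | cons i s hi ih =>
    rw [Finset.sum_cons, Finset.cons_eq_insert, Finset.biUnion_insert]
    exact MvPolynomial.support_add.trans (Finset.union_subset_union (le_refl _) ih)


lemma whom_X (j : Fin n) : WHom w (dw w (Finsupp.single j 1)) (MvPolynomial.X j : MvPolynomial (Fin n) k) := by
  refine ⟨MvPolynomial.X_ne_zero j, fun d hd => ?_⟩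
  rw [MvPolynomial.support_X, Finset.mem_singleton] at hd
  rw [hd]

end Aux

/-- If `k[f_1,…,f_n] = k[x]`, then `f_1^w, …, f_n^w` are algebraically independent over
`k` if and only if `k[f_1^w,…,f_n^w] = k[x]`. -/
theorem stmt15 (f : Fin n → MvPolynomial (Fin n) k)
    (hf : Algebra.adjoin k (Set.range f) = ⊤) (w : Fin n → Γ) :
    AlgebraicIndependent k (fun i => lform w (f i)) ↔
      Algebra.adjoin k (Set.range fun i => lform w (f i)) = ⊤ := by
  classical
  set g : Fin n → MvPolynomial (Fin n) k := fun i => lform w (f i) with hgdef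
  constructor
  · intro hI
    have hinj : Function.Injective (MvPolynomial.aeval (R := k) g) :=
      algebraicIndependent_iff_injective_aeval.mp hI
    have hg0 : ∀ i, g i ≠ 0 := by
      intro i h0
      have : (MvPolynomial.aeval (R := k) g) (X i) = MvPolynomial.aeval (R := k) g 0 := by
        rw [MvPolynomial.aeval_X, map_zero, h0]
      exact MvPolynomial.X_ne_zero i (hinj this)
    have hf0 : ∀ i, f i ≠ 0 := by
      intro i h0
      apply hg0 i
      show lform w (f i) = 0
      rw [h0, lform_zero]
    choose γ hγ using fun i => exists_wdeg (w := w) (hf0 i)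
    have hdec : ∀ i, WDec w (γ i) (f i) (g i) := fun i => WDec.self (hf0 i) (hγ i)
    have hexp : ∀ (F : Fin n → MvPolynomial (Fin n) k) (R : MvPolynomial (Fin n) k),
        aeval F R = ∑ a ∈ R.support, MvPolynomial.C (R.coeff a) * ∏ i, F i ^ a i := by
      intro F R
      conv_lhs => rw [← support_sum_monomial_coeff R]
      rw [map_sum]
      refine Finset.sum_congr rfl fun a _ => ?_
      rw [MvPolynomial.aeval_monomial, MvPolynomial.algebraMap_eq, Finsupp.prod_pow]
    have hX : ∀ j, MvPolynomial.X j ∈ Algebra.adjoin k (Set.range g) := by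
      intro j
      have hXmem : (MvPolynomial.X j : MvPolynomial (Fin n) k) ∈ (MvPolynomial.aeval (R := k) f).range := by
        rw [← Algebra.adjoin_range_eq_range_aeval, hf]
        trivial
      obtain ⟨P, hP'⟩ := hXmem
      have hP : MvPolynomial.aeval (R := k) f P = MvPolynomial.X j := hP'
      have hP0 : P ≠ 0 := by
        rintro rfl
        rw [map_zero] at hP
        exact MvPolynomial.X_ne_zero j hP.symm
      obtain ⟨μ, hμ⟩ := exists_wdeg (w := γ) hP0
      set T : (Fin n →₀ ℕ) → MvPolynomial (Fin n) k := fun a => ∏ i, f i ^ a i with hT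
      set U : (Fin n →₀ ℕ) → MvPolynomial (Fin n) k := fun a => ∏ i, g i ^ a i with hU
      set Q := lform γ P with hQdef
      have hQ0 : Q ≠ 0 := (lform_whom hP0 hμ).1
      have hQsup : ∀ a ∈ Q.support, P.coeff a ≠ 0 ∧ dw γ a = μ ∧ Q.coeff a = P.coeff a := by
        intro a ha
        have h1 := MvPolynomial.mem_support_iff.mp ha
        rw [hQdef, coeff_lform] at h1 ⊢
        by_cases hcond : ((dw γ a : Γ) : WithBot Γ) = wdeg γ P
        · rw [if_pos hcond] at h1 ⊢
          refine ⟨h1, ?_, rfl⟩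
          rw [hμ] at hcond
          exact_mod_cast hcond
        · rw [if_neg hcond] at h1
          exact absurd rfl h1
      have hQP : Q.support ⊆ P.support := fun a ha =>
        MvPolynomial.mem_support_iff.mpr (hQsup a ha).1
      have hTU : ∀ a : Fin n →₀ ℕ, WDec w (dw γ a) (T a) (U a) := by
        intro a
        have := WDec.prod (w := w) Finset.univ
          (γ := fun i => a i • γ i) (p := fun i => f i ^ a i) (h := fun i => g i ^ a i)
          (fun i _ => (hdec i).pow (a i))
        exact this
      set hval : MvPolynomial (Fin n) k :=
        ∑ a ∈ Q.support, MvPolynomial.C (P.coeff a) * U a with hvaldef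
      have hhsum : MvPolynomial.aeval (R := k) g Q = hval := by
        rw [hexp g Q, hvaldef]
        exact Finset.sum_congr rfl fun a ha => by rw [(hQsup a ha).2.2]
      have hXsum : (MvPolynomial.X j : MvPolynomial (Fin n) k)
          = ∑ a ∈ P.support, MvPolynomial.C (P.coeff a) * T a := by
        rw [← hP, hexp f P]
      have hWHom : WHom w μ hval := by
        constructor
        · rw [← hhsum]
          intro h0
          apply hQ0
          apply hinj
          rw [h0, map_zero]
        · intro d hd
          obtain ⟨a, ha, hda⟩ := Finset.mem_biUnion.mp (support_sum_subset Q.support _ hd)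
          have hterm : WHom w (0 + dw γ a)
              (MvPolynomial.C (P.coeff a) * U a) :=
            (WHom.C (hQsup a ha).1).mul (hTU a).1
          have := hterm.2 d hda
          rwa [zero_add, (hQsup a ha).2.1] at this
      have hdiff : (MvPolynomial.X j : MvPolynomial (Fin n) k) - hval = ∑ a ∈ P.support,
          (MvPolynomial.C (P.coeff a) * T a -
            if a ∈ Q.support then MvPolynomial.C (P.coeff a) * U a else 0) := by
        rw [Finset.sum_sub_distrib, Finset.sum_ite_mem,
          Finset.inter_eq_right.mpr hQP, ← hXsum, hvaldef]
      have hlt : wdeg w ((MvPolynomial.X j : MvPolynomial (Fin n) k) - hval)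
          < (μ : WithBot Γ) := by
        rw [hdiff]
        apply wdeg_sum_lt
        intro a ha
        by_cases hmem : a ∈ Q.support
        · rw [if_pos hmem, ← mul_sub]
          have hC : wdeg w (MvPolynomial.C (P.coeff a) : MvPolynomial (Fin n) k)
              ≤ ((0 : Γ) : WithBot Γ) := (WHom.C (hQsup a hmem).1).wdeg_eq.le
          have := (wdeg_mul_le (MvPolynomial.C (P.coeff a)) (T a - U a)).trans_lt
            (wb_le_lt hC (hTU a).2)
          rwa [zero_add, (hQsup a hmem).2.1] at this
        · rw [if_neg hmem, sub_zero]
          have hca : P.coeff a ≠ 0 := MvPolynomial.mem_support_iff.mp ha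
          have hC : wdeg w (MvPolynomial.C (P.coeff a) : MvPolynomial (Fin n) k)
              ≤ ((0 : Γ) : WithBot Γ) := (WHom.C hca).wdeg_eq.le
          have h1 : wdeg w (MvPolynomial.C (P.coeff a) * T a)
              ≤ ((dw γ a : Γ) : WithBot Γ) := by
            refine (wdeg_mul_le _ _).trans ?_
            have := add_le_add hC (hTU a).wdeg_le
            rwa [← WithBot.coe_add, zero_add] at this
          refine h1.trans_lt (lt_of_le_of_ne ?_ ?_)
          · rw [← hμ]
            exact le_wdeg ha
          · intro hEq
            apply hmem
            rw [hQdef, MvPolynomial.mem_support_iff, coeff_lform,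
              if_pos (by rw [hμ]; exact_mod_cast hEq)]
            exact hca
      have hWDec : WDec w μ (MvPolynomial.X j) hval := ⟨hWHom, hlt⟩
      have hXval : (MvPolynomial.X j : MvPolynomial (Fin n) k) = hval := by
        have e1 := hWDec.lform_eq
        have e2 := (whom_X (k := k) (w := w) j).lform_eq
        rw [e2] at e1
        exact e1
      rw [Algebra.adjoin_range_eq_range_aeval]
      refine ⟨Q, ?_⟩
      show MvPolynomial.aeval (R := k) g Q = MvPolynomial.X j
      rw [hhsum, ← hXval]
    have hle : Algebra.adjoin k (Set.range (MvPolynomial.X : Fin n → MvPolynomial (Fin n) k))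
        ≤ Algebra.adjoin k (Set.range g) := by
      apply Algebra.adjoin_le
      rintro _ ⟨j, rfl⟩
      exact hX j
    rw [MvPolynomial.adjoin_range_X] at hle
    exact top_le_iff.mp hle
  · intro htop
    rw [algebraicIndependent_iff_injective_aeval]
    have hsurj : Function.Surjective (MvPolynomial.aeval (R := k) g) := by
      rw [← AlgHom.range_eq_top, ← Algebra.adjoin_range_eq_range_aeval]
      exact htop
    set φ : MvPolynomial (Fin n) k →+* MvPolynomial (Fin n) k :=
      (MvPolynomial.aeval (R := k) g).toRingHom with hφdef
    have hφs : Function.Surjective φ := hsurj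
    have hpow : ∀ i : ℕ, Function.Surjective (φ ^ i) := by
      intro i
      rw [RingHom.coe_pow]
      exact Function.Surjective.iterate hφs i
    have hmono : Monotone (fun i => RingHom.ker (φ ^ i)) := by
      apply monotone_nat_of_le_succ
      intro i x hx
      have hx' : (φ ^ i) x = 0 := hx
      have : (φ ^ (i + 1)) x = φ ((φ ^ i) x) := by
        rw [pow_succ']
        rfl
      show (φ ^ (i + 1)) x = 0
      rw [this, hx', map_zero]
    obtain ⟨N, hN⟩ := monotone_stabilizes_iff_noetherian.mpr
      (inferInstance : IsNoetherianRing (MvPolynomial (Fin n) k))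
      ⟨fun i => RingHom.ker (φ ^ i), hmono⟩
    have hinj : ∀ a, φ a = 0 → a = 0 := by
      intro a ha
      obtain ⟨b, rfl⟩ := hpow N a
      have hb : b ∈ RingHom.ker (φ ^ (N + 1)) := by
        show (φ ^ (N + 1)) b = 0
        have : (φ ^ (N + 1)) b = φ ((φ ^ N) b) := by
          rw [pow_succ']
          rfl
        rw [this, ha]
      have h2 : RingHom.ker (φ ^ N) = RingHom.ker (φ ^ (N + 1)) :=
        hN (N + 1) (Nat.le_succ N)
      have hb' : b ∈ RingHom.ker (φ ^ N) := by rw [h2]; exact hb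
      exact hb'
    exact (injective_iff_map_eq_zero φ).mpr hinj
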